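/- Let A be an associative ring and Δ_i the alternated product of i elements. For any positive integers k, ℓ, the unshuffle-composition Δ_k[Δ_{2ℓ+1}], i.e. Σ over (2ℓ+1, k−1)-unshuffles τ of sgn(τ)·Δ_k(Δ_{2ℓ+1}(a_{τ(1)},…,a_{τ(2ℓ+1)}), a_{τ(2ℓ+2)},…,a_{τ(2ℓ+k)}), equals k·Δ_{2ℓ+k}(a₁,…,a_{2ℓ+k}). -/

import Mathlib

open Equiv Equiv.Perm Finset

section CycleRangeVal

variable {n : ℕ}

lemma cycleRange_val (j t : Fin n) :
    ((j.cycleRange t : Fin n) : ℕ) =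
      if (t : ℕ) < (j : ℕ) then (t : ℕ) + 1 else if (t : ℕ) = (j : ℕ) then 0 else (t : ℕ) := by
  cases n with
  | zero => exact t.elim0
  | succ n =>
    rw [Fin.cycleRange_apply]
    rcases lt_trichotomy (t : ℕ) (j : ℕ) with h | h | h
    · rw [if_pos (by exact Fin.lt_def.2 h), if_pos h]
      exact Fin.val_add_one_of_lt (Fin.lt_def.2 (by have := j.isLt; simp [Fin.last]; omega))
    · have ht : t = j := Fin.ext h
      simp [ht]
    · rw [if_neg (by exact fun e => by rw [Fin.lt_def] at e; omega), if_neg (by omega),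
        if_neg (by omega), if_neg (by exact fun e => by rw [e] at h; omega)]

lemma cycleRange_pow_val (j : Fin n) (q : ℕ) (t : Fin n) :
    (((j.cycleRange ^ q) t : Fin n) : ℕ) =
      if (t : ℕ) ≤ (j : ℕ) then ((t : ℕ) + q) % ((j : ℕ) + 1) else (t : ℕ) := by
  induction q generalizing t with
  | zero =>
    simp only [pow_zero, one_apply]
    split
    · exact (Nat.mod_eq_of_lt (by omega)).symm
    · rfl
  | succ q ih =>
    rw [pow_succ, mul_apply]
    have hc := cycleRange_val j t
    rcases le_or_gt (t : ℕ) (j : ℕ) with h | h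
    · rw [if_pos h]
      rcases lt_or_eq_of_le h with h' | h'
      · rw [if_pos h'] at hc
        have h2 : ((j.cycleRange t : Fin n) : ℕ) ≤ (j : ℕ) := by omega
        rw [ih (j.cycleRange t), if_pos (hc ▸ h2), hc]
        congr 1
        omega
      · rw [if_neg (by omega), if_pos h'] at hc
        rw [ih (j.cycleRange t), hc, if_pos (by omega)]
        rw [Nat.zero_add]
        conv_rhs => rw [show (t : ℕ) + (q + 1) = ((j : ℕ) + 1) + q by omega]
        rw [Nat.add_mod_left]
    · rw [if_neg (by omega), if_neg (by omega)] at hc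
      rw [if_neg (by omega), ih (j.cycleRange t), hc, if_neg (by omega)]

end CycleRangeVal

section Blk

variable {m r : ℕ}

/-- The block permutation acting as `ρ` on `[0,m)` and `δ` on `[m, m+r)`. -/
def blk (ρ : Equiv.Perm (Fin m)) (δ : Equiv.Perm (Fin r)) : Equiv.Perm (Fin (m + r)) :=
  finSumFinEquiv.permCongr (Equiv.Perm.sumCongr ρ δ)

lemma blk_apply_castAdd (ρ : Perm (Fin m)) (δ : Perm (Fin r)) (i : Fin m) :
    blk ρ δ (Fin.castAdd r i) = Fin.castAdd r (ρ i) := by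
  simp [blk, Equiv.permCongr_apply, finSumFinEquiv_symm_apply_castAdd]

lemma blk_apply_natAdd (ρ : Perm (Fin m)) (δ : Perm (Fin r)) (i : Fin r) :
    blk ρ δ (Fin.natAdd m i) = Fin.natAdd m (δ i) := by
  simp [blk, Equiv.permCongr_apply, finSumFinEquiv_symm_apply_natAdd]

lemma sign_blk (ρ : Perm (Fin m)) (δ : Perm (Fin r)) :
    Equiv.Perm.sign (blk ρ δ) = Equiv.Perm.sign ρ * Equiv.Perm.sign δ := by
  rw [blk, Equiv.Perm.sign_permCongr, Equiv.Perm.sign_sumCongr]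

lemma blk_mul (ρ ρ' : Perm (Fin m)) (δ δ' : Perm (Fin r)) :
    blk ρ δ * blk ρ' δ' = blk (ρ * ρ') (δ * δ') := by
  apply Equiv.ext
  intro x
  obtain ⟨s, rfl⟩ : ∃ s, finSumFinEquiv s = x := ⟨finSumFinEquiv.symm x, by simp⟩
  rcases s with i | i
  · rw [finSumFinEquiv_apply_left, Perm.mul_apply, blk_apply_castAdd, blk_apply_castAdd,
      blk_apply_castAdd]
    rfl
  · rw [finSumFinEquiv_apply_right, Perm.mul_apply, blk_apply_natAdd, blk_apply_natAdd,
      blk_apply_natAdd]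
    rfl

lemma blk_one : blk (1 : Perm (Fin m)) (1 : Perm (Fin r)) = 1 := by
  apply Equiv.ext
  intro x
  obtain ⟨s, rfl⟩ : ∃ s, finSumFinEquiv s = x := ⟨finSumFinEquiv.symm x, by simp⟩
  rcases s with i | i
  · rw [finSumFinEquiv_apply_left, blk_apply_castAdd]; rfl
  · rw [finSumFinEquiv_apply_right, blk_apply_natAdd]; rfl

lemma blk_inv (ρ : Perm (Fin m)) (δ : Perm (Fin r)) :
    (blk ρ δ)⁻¹ = blk ρ⁻¹ δ⁻¹ := by
  have h : blk ρ δ * blk ρ⁻¹ δ⁻¹ = 1 := by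
    rw [blk_mul, mul_inv_cancel, mul_inv_cancel, blk_one]
  exact (eq_inv_of_mul_eq_one_right h).symm

/-- The rotation taking the block `[0,m)` to `[p, p+m)`. -/
def gam (hm : 0 < m) (p : Fin (r + 1)) : Equiv.Perm (Fin (m + r)) :=
  (Fin.cycleRange (⟨m + (p : ℕ) - 1, by have := p.isLt; omega⟩ : Fin (m + r))) ^ (p : ℕ)

lemma gam_val (hm : 0 < m) (p : Fin (r + 1)) (t : Fin (m + r)) :
    ((gam hm p t : Fin (m + r)) : ℕ) =
      if (t : ℕ) < m then (t : ℕ) + p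
      else if (t : ℕ) < m + p then (t : ℕ) - m else (t : ℕ) := by
  have hp := p.isLt
  rw [gam, cycleRange_pow_val]
  simp only [Fin.val_mk]
  rcases Nat.lt_or_ge (t : ℕ) (m + p) with h | h
  · rw [if_pos (by omega), show m + (p : ℕ) - 1 + 1 = m + (p : ℕ) by omega]
    rcases Nat.lt_or_ge (t : ℕ) m with h2 | h2
    · rw [if_pos h2, Nat.mod_eq_of_lt (by omega)]
    · rw [if_neg (by omega), if_pos (by omega),
        show (t : ℕ) + (p : ℕ) = (m + (p : ℕ)) + ((t : ℕ) - m) by omega, Nat.add_mod_left,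
        Nat.mod_eq_of_lt (by omega)]
  · rw [if_neg (by omega), if_neg (by omega), if_neg (by omega)]

lemma gam_inv_val (hm : 0 < m) (p : Fin (r + 1)) (t : Fin (m + r)) :
    (((gam hm p)⁻¹ t : Fin (m + r)) : ℕ) =
      if (t : ℕ) < p then m + (t : ℕ)
      else if (t : ℕ) < m + p then (t : ℕ) - p else (t : ℕ) := by
  have hp := p.isLt
  have ht := t.isLt
  rcases Nat.lt_or_ge (t : ℕ) (p : ℕ) with h1 | h1
  · rw [if_pos h1]
    have h : (gam hm p) ⟨m + (t : ℕ), by omega⟩ = t := by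
      apply Fin.ext
      rw [gam_val]
      simp only [Fin.val_mk]
      rw [if_neg (by omega), if_pos (by omega)]
      omega
    rw [← h, Perm.coe_inv, Equiv.symm_apply_apply, h]
  · rw [if_neg (by omega)]
    rcases Nat.lt_or_ge (t : ℕ) (m + p) with h2 | h2
    · rw [if_pos h2]
      have h : (gam hm p) ⟨(t : ℕ) - (p : ℕ), by omega⟩ = t := by
        apply Fin.ext
        rw [gam_val]
        simp only [Fin.val_mk]
        rw [if_pos (by omega)]
        omega
      rw [← h, Perm.coe_inv, Equiv.symm_apply_apply, h]
    · rw [if_neg (by omega)]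
      have h : (gam hm p) ⟨(t : ℕ), ht⟩ = t := by
        apply Fin.ext
        rw [gam_val]
        simp only [Fin.val_mk]
        rw [if_neg (by omega), if_neg (by omega)]
      rw [← h, Perm.coe_inv, Equiv.symm_apply_apply, h]

lemma sign_gam (hm : 0 < m) (hodd : Odd m) (p : Fin (r + 1)) :
    Equiv.Perm.sign (gam hm p) = (-1) ^ (p : ℕ) := by
  rw [gam, map_pow, Fin.sign_cycleRange, ← pow_mul]
  rcases Nat.even_or_odd (p : ℕ) with he | ho
  · rw [(he.mul_left _).neg_one_pow, he.neg_one_pow]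
  · have h1 : Odd (m + (p : ℕ) - 1) := by
      have h2 : Even (m + (p : ℕ)) := hodd.add_odd ho
      exact Nat.Even.sub_odd (by omega) h2 odd_one
    rw [(h1.mul ho).neg_one_pow, ho.neg_one_pow]

end Blk

/-- The fully alternated product of `n` elements of an associative ring. -/
def altProd {A : Type*} [Ring A] {n : ℕ} (a : Fin n → A) : A :=
  ∑ σ : Equiv.Perm (Fin n), (Equiv.Perm.sign σ : ℤ) • (List.ofFn (fun i => a (σ i))).prod

/-- A permutation of `{0,…,n−1}` is an `(m, n−m)`-unshuffle when it is increasing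
on the first `m` positions and on the remaining positions. -/
def IsUnshuffle {n : ℕ} (m : ℕ) (τ : Equiv.Perm (Fin n)) : Prop :=
  ∀ i j : Fin n, i < j → ((j : ℕ) < m ∨ m ≤ (i : ℕ)) → τ i < τ j

section Decomp

variable {m r : ℕ}

lemma IsUnshuffle.strictMono_left {τ : Perm (Fin (m + r))} (h : IsUnshuffle m τ) :
    StrictMono fun i : Fin m => τ (Fin.castAdd r i) := by
  intro i j hij
  apply h _ _ (by rw [Fin.lt_def, Fin.coe_castAdd, Fin.coe_castAdd]; exact Fin.lt_def.1 hij)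
  left
  simpa using j.isLt

lemma IsUnshuffle.strictMono_right {τ : Perm (Fin (m + r))} (h : IsUnshuffle m τ) :
    StrictMono fun i : Fin r => τ (Fin.natAdd m i) := by
  intro i j hij
  apply h _ _ (by
    rw [Fin.lt_def, Fin.coe_natAdd, Fin.coe_natAdd]
    have := Fin.lt_def.1 hij
    omega)
  right
  simp

/-- Sorting permutation for the first block. -/
def srt1 (g : Perm (Fin (m + r))) : Perm (Fin m) :=
  Tuple.sort fun i : Fin m => g (Fin.castAdd r i)

/-- Sorting permutation for the second block. -/
def srt2 (g : Perm (Fin (m + r))) : Perm (Fin r) :=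
  Tuple.sort fun i : Fin r => g (Fin.natAdd m i)

lemma castAdd_inj : Function.Injective (Fin.castAdd r : Fin m → Fin (m + r)) := by
  intro x y h
  apply Fin.ext
  simpa [Fin.ext_iff] using h

lemma natAdd_inj : Function.Injective (Fin.natAdd m : Fin r → Fin (m + r)) := by
  intro x y h
  apply Fin.ext
  simpa [Fin.ext_iff] using h

lemma isUnshuffle_unsh (g : Perm (Fin (m + r))) :
    IsUnshuffle m (g * blk (srt1 g) (srt2 g)) := by
  have h1 : StrictMono ((fun i : Fin m => g (Fin.castAdd r i)) ∘ (srt1 g)) :=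
    (Tuple.monotone_sort _).strictMono_of_injective
      ((g.injective.comp castAdd_inj).comp (srt1 g).injective)
  have h2 : StrictMono ((fun i : Fin r => g (Fin.natAdd m i)) ∘ (srt2 g)) :=
    (Tuple.monotone_sort _).strictMono_of_injective
      ((g.injective.comp natAdd_inj).comp (srt2 g).injective)
  intro i j hij hc
  rcases hc with hc | hc
  · have hi : (i : ℕ) < m := by have := Fin.lt_def.1 hij; omega
    have ei : i = Fin.castAdd r ⟨(i : ℕ), hi⟩ := Fin.ext rfl
    have ej : j = Fin.castAdd r ⟨(j : ℕ), hc⟩ := Fin.ext rfl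
    rw [ei, ej, Perm.mul_apply, Perm.mul_apply, blk_apply_castAdd, blk_apply_castAdd]
    exact h1 (show (⟨(i : ℕ), hi⟩ : Fin m) < ⟨(j : ℕ), hc⟩ from hij)
  · have hj : m ≤ (j : ℕ) := by have := Fin.lt_def.1 hij; omega
    have hi' : (i : ℕ) - m < r := by have := i.isLt; omega
    have hj' : (j : ℕ) - m < r := by have := j.isLt; omega
    have ei : i = Fin.natAdd m ⟨(i : ℕ) - m, hi'⟩ := Fin.ext (by simp; omega)
    have ej : j = Fin.natAdd m ⟨(j : ℕ) - m, hj'⟩ := Fin.ext (by simp; omega)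
    rw [ei, ej, Perm.mul_apply, Perm.mul_apply, blk_apply_natAdd, blk_apply_natAdd]
    apply h2
    show (⟨(i : ℕ) - m, hi'⟩ : Fin r) < ⟨(j : ℕ) - m, hj'⟩
    rw [Fin.lt_def]
    have := Fin.lt_def.1 hij
    simp only [Fin.val_mk]
    omega

open Classical in
lemma sum_unshuffle_decomp {M : Type*} [AddCommMonoid M] (G : Perm (Fin (m + r)) → M) :
    ∑ τ ∈ Finset.univ.filter (fun τ : Perm (Fin (m + r)) => IsUnshuffle m τ),
      ∑ ρ : Perm (Fin m), ∑ δ : Perm (Fin r), G (τ * blk ρ δ)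
    = ∑ π : Perm (Fin (m + r)), G π := by
  have step : ∀ τ ∈ Finset.univ.filter (fun τ : Perm (Fin (m + r)) => IsUnshuffle m τ),
      ∑ ρ : Perm (Fin m), ∑ δ : Perm (Fin r), G (τ * blk ρ δ)
      = ∑ q ∈ (Finset.univ : Finset (Perm (Fin m) × Perm (Fin r))), G (τ * blk q.1 q.2) := by
    intro τ _
    rw [← Finset.univ_product_univ, Finset.sum_product]
  rw [Finset.sum_congr rfl step, ← Finset.sum_product']
  apply Finset.sum_bij
    (i := fun (x : Perm (Fin (m + r)) × (Perm (Fin m) × Perm (Fin r))) _ =>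
      x.1 * blk x.2.1 x.2.2)
  · intro a _
    exact Finset.mem_univ _
  · -- injectivity
    rintro ⟨τ₁, ρ₁, δ₁⟩ h₁ ⟨τ₂, ρ₂, δ₂⟩ h₂ heq
    simp only [Finset.mem_product, Finset.mem_filter, Finset.mem_univ, true_and] at h₁ h₂
    have hu₁ : IsUnshuffle m τ₁ := h₁.1
    have hu₂ : IsUnshuffle m τ₂ := h₂.1
    simp only at heq
    have rangeL : ∀ (τ : Perm (Fin (m + r))) (ρ : Perm (Fin m)) (δ : Perm (Fin r)),
        Set.range (fun i : Fin m => (τ * blk ρ δ) (Fin.castAdd r i))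
          = Set.range (fun i : Fin m => τ (Fin.castAdd r i)) := by
      intro τ ρ δ
      have : (fun i : Fin m => (τ * blk ρ δ) (Fin.castAdd r i))
          = (fun i : Fin m => τ (Fin.castAdd r i)) ∘ ρ := by
        funext i
        simp only [Function.comp_apply, Perm.mul_apply, blk_apply_castAdd]
      rw [this, Function.Surjective.range_comp ρ.surjective]
    have rangeR : ∀ (τ : Perm (Fin (m + r))) (ρ : Perm (Fin m)) (δ : Perm (Fin r)),
        Set.range (fun i : Fin r => (τ * blk ρ δ) (Fin.natAdd m i))
          = Set.range (fun i : Fin r => τ (Fin.natAdd m i)) := by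
      intro τ ρ δ
      have : (fun i : Fin r => (τ * blk ρ δ) (Fin.natAdd m i))
          = (fun i : Fin r => τ (Fin.natAdd m i)) ∘ δ := by
        funext i
        simp only [Function.comp_apply, Perm.mul_apply, blk_apply_natAdd]
      rw [this, Function.Surjective.range_comp δ.surjective]
    have hLe : (fun i : Fin m => τ₁ (Fin.castAdd r i)) = fun i => τ₂ (Fin.castAdd r i) := by
      have : WellFoundedLT (Fin m) := inferInstance
      have hiff := StrictMono.range_inj hu₁.strictMono_left hu₂.strictMono_left
      exact hiff.1 (by rw [← rangeL τ₁ ρ₁ δ₁, ← rangeL τ₂ ρ₂ δ₂, heq])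
    have hRe : (fun i : Fin r => τ₁ (Fin.natAdd m i)) = fun i => τ₂ (Fin.natAdd m i) := by
      have : WellFoundedLT (Fin r) := inferInstance
      have hiff := StrictMono.range_inj hu₁.strictMono_right hu₂.strictMono_right
      exact hiff.1 (by rw [← rangeR τ₁ ρ₁ δ₁, ← rangeR τ₂ ρ₂ δ₂, heq])
    have hτ : τ₁ = τ₂ := by
      apply Equiv.ext
      intro t
      rcases Nat.lt_or_ge (t : ℕ) m with h | h
      · have et : t = Fin.castAdd r ⟨(t : ℕ), h⟩ := Fin.ext rfl
        rw [et]
        exact congrFun hLe _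
      · have h' : (t : ℕ) - m < r := by have := t.isLt; omega
        have et : t = Fin.natAdd m ⟨(t : ℕ) - m, h'⟩ := Fin.ext (by simp; omega)
        rw [et]
        exact congrFun hRe _
    subst hτ
    have hb : blk ρ₁ δ₁ = blk ρ₂ δ₂ := mul_left_cancel heq
    have hρ : ρ₁ = ρ₂ := by
      apply Equiv.ext
      intro i
      have h2 : blk ρ₁ δ₁ (Fin.castAdd r i) = blk ρ₂ δ₂ (Fin.castAdd r i) := by rw [hb]
      rw [blk_apply_castAdd, blk_apply_castAdd] at h2
      exact castAdd_inj h2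
    have hδ : δ₁ = δ₂ := by
      apply Equiv.ext
      intro i
      have h2 : blk ρ₁ δ₁ (Fin.natAdd m i) = blk ρ₂ δ₂ (Fin.natAdd m i) := by rw [hb]
      rw [blk_apply_natAdd, blk_apply_natAdd] at h2
      exact natAdd_inj h2
    rw [hρ, hδ]
  · -- surjectivity
    intro π _
    refine ⟨⟨π * blk (srt1 π) (srt2 π), ((srt1 π)⁻¹, (srt2 π)⁻¹)⟩, ?_, ?_⟩
    · simp only [Finset.mem_product, Finset.mem_filter, Finset.mem_univ, true_and]
      exact ⟨isUnshuffle_unsh π, trivial⟩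
    · simp only
      rw [mul_assoc, blk_mul, mul_inv_cancel, mul_inv_cancel, blk_one, mul_one]
  · intro a _
    rfl

end Decomp

section Ins

variable {r : ℕ}

/-- The permutation of `Fin (r+1)` sending `p` to `0` and acting as `δ` (shifted by one)
on the rest, preserving relative order of the complement of `p`. -/
def ins (p : Fin (r + 1)) (δ : Perm (Fin r)) : Perm (Fin (r + 1)) :=
  (Equiv.Perm.decomposeFin.symm (0, δ)) * Fin.cycleRange p

lemma ins_apply_self (p : Fin (r + 1)) (δ : Perm (Fin r)) : ins p δ p = 0 := by
  rw [ins, Perm.mul_apply, Fin.cycleRange_self, Equiv.Perm.decomposeFin_symm_apply_zero]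

lemma decompose_zero_succ (δ : Perm (Fin r)) (x : Fin r) :
    (Equiv.Perm.decomposeFin.symm (0, δ)) x.succ = (δ x).succ := by
  rw [Equiv.Perm.decomposeFin_symm_apply_succ]
  simp

lemma ins_val_lt (p : Fin (r + 1)) (δ : Perm (Fin r)) (i : Fin (r + 1))
    (h : (i : ℕ) < (p : ℕ)) :
    ((ins p δ i : Fin (r + 1)) : ℕ) = (δ ⟨(i : ℕ), by omega⟩ : ℕ) + 1 := by
  have hp := p.isLt
  have hc : Fin.cycleRange p i = (⟨(i : ℕ), by omega⟩ : Fin r).succ := by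
    apply Fin.ext
    rw [cycleRange_val, if_pos h]
    simp
  rw [ins, Perm.mul_apply, hc, decompose_zero_succ]
  simp

lemma ins_val_gt (p : Fin (r + 1)) (δ : Perm (Fin r)) (i : Fin (r + 1))
    (h : (p : ℕ) < (i : ℕ)) :
    ((ins p δ i : Fin (r + 1)) : ℕ) = (δ ⟨(i : ℕ) - 1, by omega⟩ : ℕ) + 1 := by
  have hi := i.isLt
  have hc : Fin.cycleRange p i = (⟨(i : ℕ) - 1, by omega⟩ : Fin r).succ := by
    apply Fin.ext
    rw [cycleRange_val, if_neg (by omega), if_neg (by omega)]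
    simp
    omega
  rw [ins, Perm.mul_apply, hc, decompose_zero_succ]
  simp

lemma ins_ne_self (p : Fin (r + 1)) (δ : Perm (Fin r)) (i : Fin (r + 1)) (h : i ≠ p) :
    ((ins p δ i : Fin (r + 1)) : ℕ) ≠ 0 := by
  rcases Nat.lt_trichotomy (i : ℕ) (p : ℕ) with h1 | h1 | h1
  · rw [ins_val_lt p δ i h1]; omega
  · exact absurd (Fin.ext h1) h
  · rw [ins_val_gt p δ i h1]; omega

lemma sign_ins (p : Fin (r + 1)) (δ : Perm (Fin r)) :
    Equiv.Perm.sign (ins p δ) = (-1) ^ (p : ℕ) * Equiv.Perm.sign δ := by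
  rw [ins, map_mul, Equiv.Perm.decomposeFin.symm_sign, Fin.sign_cycleRange, if_pos rfl,
    one_mul, mul_comm]

lemma ins_bijective :
    Function.Bijective (fun x : Fin (r + 1) × Perm (Fin r) => ins x.1 x.2) := by
  constructor
  · rintro ⟨p₁, δ₁⟩ ⟨p₂, δ₂⟩ h
    simp only at h
    have hp : p₁ = p₂ := by
      have h1 : ins p₁ δ₁ p₁ = 0 := ins_apply_self _ _
      have h2 : ins p₁ δ₁ p₂ = 0 := by rw [h]; exact ins_apply_self _ _
      exact (ins p₁ δ₁).injective (h1.trans h2.symm)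
    subst hp
    have hd : Equiv.Perm.decomposeFin.symm ((0 : Fin (r + 1)), δ₁)
        = Equiv.Perm.decomposeFin.symm ((0 : Fin (r + 1)), δ₂) :=
      mul_right_cancel h
    have hδ : δ₁ = δ₂ := by
      apply Equiv.ext
      intro x
      have := congrArg (fun (e : Perm (Fin (r + 1))) => e x.succ) hd
      simp only [decompose_zero_succ] at this
      exact Fin.succ_injective _ this
    rw [hδ]
  · intro σ
    set p : Fin (r + 1) := σ⁻¹ 0 with hp
    have hσp : σ p = 0 := by rw [hp]; exact σ.apply_symm_apply 0
    set ε : Perm (Fin (r + 1)) := σ * (Fin.cycleRange p)⁻¹ with hε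
    have hε0 : ε 0 = 0 := by
      rw [hε, Perm.mul_apply]
      have : (Fin.cycleRange p)⁻¹ 0 = p := by
        rw [Equiv.Perm.inv_def, Equiv.symm_apply_eq, Fin.cycleRange_self]
      rw [this, hσp]
    refine ⟨⟨p, (Equiv.Perm.decomposeFin ε).2⟩, ?_⟩
    have h2 : Equiv.Perm.decomposeFin.symm
        ((Equiv.Perm.decomposeFin ε).1, (Equiv.Perm.decomposeFin ε).2) = ε := by
      rw [Prod.mk.eta]
      exact Equiv.symm_apply_apply _ _
    have h1 : (Equiv.Perm.decomposeFin ε).1 = 0 := by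
      conv_lhs => rw [← Equiv.Perm.decomposeFin_symm_apply_zero
        (Equiv.Perm.decomposeFin ε).1 (Equiv.Perm.decomposeFin ε).2]
      rw [h2, hε0]
    show ins p (Equiv.Perm.decomposeFin ε).2 = σ
    rw [ins]
    have h3 : Equiv.Perm.decomposeFin.symm ((0 : Fin (r + 1)), (Equiv.Perm.decomposeFin ε).2)
        = ε := by
      rw [← h1, h2]
    rw [h3, hε, inv_mul_cancel_right]

end Ins

section Flatten

variable {A : Type*} [Ring A]

lemma prod_update_flatten {m r : ℕ} (p : Fin (r + 1)) (v : Fin (r + 1) → A) (u : Fin m → A) :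
    (List.ofFn (Function.update v p ((List.ofFn u).prod))).prod =
      (List.ofFn (fun t : Fin (m + r) =>
        if h : (t : ℕ) < (p : ℕ) then v ⟨(t : ℕ), by omega⟩
        else if h2 : (t : ℕ) < m + (p : ℕ) then u ⟨(t : ℕ) - (p : ℕ), by omega⟩
        else v ⟨(t : ℕ) - m + 1, by omega⟩)).prod := by
  classical
  have hp := p.isLt
  have e1 : r + 1 = (p : ℕ) + (1 + (r - (p : ℕ))) := by omega
  have e2 : m + r = (p : ℕ) + (m + (r - (p : ℕ))) := by omega
  rw [List.ofFn_congr e1, List.ofFn_add, List.ofFn_add, List.ofFn_congr e2, List.ofFn_add,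
    List.ofFn_add, List.prod_append, List.prod_append, List.prod_append, List.prod_append]
  refine congrArg₂ (· * ·) ?_ (congrArg₂ (· * ·) ?_ ?_)
  · -- left block
    congr 1
    apply congrArg
    funext i
    have hi := i.isLt
    have hne : Fin.cast e1.symm (Fin.castLE (by omega) i) ≠ p := by
      intro he
      have h3 := congrArg Fin.val he
      simp only [Fin.coe_cast, Fin.coe_castLE] at h3
      omega
    rw [Function.update_of_ne hne]
    simp only [Fin.coe_cast, Fin.coe_castLE]
    rw [dif_pos (by omega)]
    exact congrArg v (Fin.ext (by simp))
  · -- middle block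
    rw [List.ofFn_succ, List.ofFn_zero, List.prod_cons, List.prod_nil, mul_one]
    have hmid : Fin.cast e1.symm (Fin.natAdd (p : ℕ) (Fin.castLE (by omega) (0 : Fin 1)))
        = p := Fin.ext (by simp)
    rw [hmid, Function.update_self]
    congr 1
    apply congrArg
    funext i
    have hi := i.isLt
    simp only [Fin.coe_cast, Fin.coe_natAdd, Fin.coe_castAdd, Fin.coe_castLE]
    rw [dif_neg (by omega), dif_pos (by omega)]
    exact congrArg u (Fin.ext (by simp))
  · -- right block
    congr 1
    apply congrArg
    funext i
    have hi := i.isLt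
    have hne : Fin.cast e1.symm (Fin.natAdd (p : ℕ) (Fin.natAdd 1 i)) ≠ p := by
      intro he
      have h3 := congrArg Fin.val he
      simp only [Fin.coe_cast, Fin.coe_natAdd] at h3
      omega
    rw [Function.update_of_ne hne]
    simp only [Fin.coe_cast, Fin.coe_natAdd, Fin.coe_castAdd]
    rw [dif_neg (by omega), dif_neg (by omega)]
    refine congrArg v (Fin.ext ?_)
    simp only [Fin.coe_cast, Fin.coe_natAdd, Fin.val_mk]
    omega

end Flatten

section Inner

variable {A : Type*} [Ring A]

lemma ins_val_lt' {r : ℕ} (p : Fin (r + 1)) (δ : Perm (Fin r)) (i : Fin (r + 1)) (i' : Fin r)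
    (hv : (i' : ℕ) = (i : ℕ)) (h : (i : ℕ) < (p : ℕ)) :
    ((ins p δ i : Fin (r + 1)) : ℕ) = (δ i' : ℕ) + 1 := by
  rw [ins_val_lt p δ i h]
  congr 1
  exact congrArg (fun x => ((δ x : Fin r) : ℕ)) (Fin.ext hv.symm)

lemma ins_val_gt' {r : ℕ} (p : Fin (r + 1)) (δ : Perm (Fin r)) (i : Fin (r + 1)) (i' : Fin r)
    (hv : (i' : ℕ) = (i : ℕ) - 1) (h : (p : ℕ) < (i : ℕ)) :
    ((ins p δ i : Fin (r + 1)) : ℕ) = (δ i' : ℕ) + 1 := by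
  rw [ins_val_gt p δ i h]
  congr 1
  exact congrArg (fun x => ((δ x : Fin r) : ℕ)) (Fin.ext hv.symm)

lemma inner_expand {m r : ℕ} (hm : 0 < m) (a : Fin (m + r) → A) (τ : Perm (Fin (m + r))) :
    altProd (fun j : Fin (r + 1) =>
      if (j : ℕ) = 0 then altProd (fun i : Fin m => a (τ ⟨(i : ℕ), by omega⟩))
      else a (τ ⟨m - 1 + (j : ℕ), by omega⟩))
    = ∑ p : Fin (r + 1), ∑ δ : Perm (Fin r), ∑ ρ : Perm (Fin m),
        ((Equiv.Perm.sign (ins p δ) : ℤ) * (Equiv.Perm.sign ρ : ℤ)) •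
          (List.ofFn fun t : Fin (m + r) => a ((τ * blk ρ δ * (gam hm p)⁻¹) t)).prod := by
  classical
  set b : Fin (r + 1) → A := fun j : Fin (r + 1) =>
      if (j : ℕ) = 0 then altProd (fun i : Fin m => a (τ ⟨(i : ℕ), by omega⟩))
      else a (τ ⟨m - 1 + (j : ℕ), by omega⟩) with hb
  have step1 : altProd b
      = ∑ σ : Perm (Fin (r + 1)), (Equiv.Perm.sign σ : ℤ) •
          (List.ofFn fun i => b (σ i)).prod := rfl
  have step2 : altProd b = ∑ p : Fin (r + 1), ∑ δ : Perm (Fin r),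
      (Equiv.Perm.sign (ins p δ) : ℤ) • (List.ofFn fun i => b (ins p δ i)).prod := by
    rw [step1]
    have e := Fintype.sum_bijective _ ins_bijective
      (fun x : Fin (r + 1) × Perm (Fin r) => (Equiv.Perm.sign (ins x.1 x.2) : ℤ) •
        (List.ofFn fun i => b (ins x.1 x.2 i)).prod)
      (fun σ : Perm (Fin (r + 1)) => (Equiv.Perm.sign σ : ℤ) • (List.ofFn fun i => b (σ i)).prod)
      (fun x => rfl)
    rw [← e]
    exact Fintype.sum_prod_type _
  rw [step2]
  apply Finset.sum_congr rfl
  intro p _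
  apply Finset.sum_congr rfl
  intro δ _
  -- expand the inner altProd sitting at position p
  set base : Fin (r + 1) → A := fun i : Fin (r + 1) =>
    a (τ ⟨m - 1 + ((ins p δ i : Fin (r + 1)) : ℕ), by
      have := (ins p δ i).isLt; omega⟩) with hbase
  have hupdate : (fun i => b (ins p δ i))
      = Function.update base p (altProd (fun i : Fin m => a (τ ⟨(i : ℕ), by omega⟩))) := by
    funext i
    by_cases hip : i = p
    · subst hip
      rw [Function.update_self, hb]
      simp [ins_apply_self]
    · rw [Function.update_of_ne hip, hb, hbase]
      simp only [if_neg (ins_ne_self p δ i hip)]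
  rw [hupdate]
  have hXsum : altProd (fun i : Fin m => a (τ ⟨(i : ℕ), by omega⟩))
      = ∑ ρ : Perm (Fin m), (Equiv.Perm.sign ρ : ℤ) •
          (List.ofFn fun i : Fin m => a (τ ⟨((ρ i : Fin m) : ℕ), by omega⟩)).prod := rfl
  have hf : ∀ w : Fin (r + 1) → A, (List.ofFn w).prod
      = MultilinearMap.mkPiAlgebraFin ℤ (r + 1) A w := fun w =>
    (MultilinearMap.mkPiAlgebraFin_apply w).symm
  rw [hf, hXsum, MultilinearMap.map_update_sum, Finset.smul_sum]
  apply Finset.sum_congr rfl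
  intro ρ _
  rw [MultilinearMap.map_update_smul, MultilinearMap.mkPiAlgebraFin_apply,
    prod_update_flatten p base (fun i : Fin m => a (τ ⟨((ρ i : Fin m) : ℕ), by omega⟩)),
    smul_smul]
  refine congrArg _ (congrArg List.prod (congrArg List.ofFn (funext fun t => ?_)))
  have hp := p.isLt
  have ht := t.isLt
  rw [Perm.mul_apply, Perm.mul_apply]
  rcases Nat.lt_or_ge (t : ℕ) (p : ℕ) with h1 | h1
  · rw [dif_pos h1]
    have hgam : (gam hm p)⁻¹ t = Fin.natAdd m ⟨(t : ℕ), by omega⟩ := by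
      apply Fin.ext
      rw [gam_inv_val]
      simp only [Fin.coe_natAdd, Fin.val_mk]
      rw [if_pos h1]
    rw [hgam, blk_apply_natAdd, hbase]
    refine congrArg a (congrArg τ (Fin.ext ?_))
    simp only [Fin.val_mk, Fin.coe_natAdd]
    rw [ins_val_lt' p δ ⟨(t : ℕ), by omega⟩ ⟨(t : ℕ), by omega⟩ rfl (by
      simp only [Fin.val_mk]; exact h1)]
    omega
  · rw [dif_neg (by omega)]
    rcases Nat.lt_or_ge (t : ℕ) (m + (p : ℕ)) with h2 | h2
    · rw [dif_pos h2]
      have hgam : (gam hm p)⁻¹ t = Fin.castAdd r ⟨(t : ℕ) - (p : ℕ), by omega⟩ := by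
        apply Fin.ext
        rw [gam_inv_val]
        simp only [Fin.coe_castAdd, Fin.val_mk]
        rw [if_neg (by omega), if_pos (by omega)]
      rw [hgam, blk_apply_castAdd]
      rfl
    · rw [dif_neg (by omega)]
      have hgam : (gam hm p)⁻¹ t = Fin.natAdd m ⟨(t : ℕ) - m, by omega⟩ := by
        apply Fin.ext
        rw [gam_inv_val]
        simp only [Fin.coe_natAdd, Fin.val_mk]
        rw [if_neg (by omega), if_neg (by omega)]
        omega
      rw [hgam, blk_apply_natAdd, hbase]
      refine congrArg a (congrArg τ (Fin.ext ?_))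
      simp only [Fin.val_mk, Fin.coe_natAdd]
      rw [ins_val_gt' p δ ⟨(t : ℕ) - m + 1, by omega⟩ ⟨(t : ℕ) - m, by omega⟩ (by
        simp only [Fin.val_mk]; omega) (by simp only [Fin.val_mk]; omega)]
      omega

end Inner

section Key

variable {A : Type*} [Ring A]

open Classical in
theorem key (m r N k : ℕ) (hm : 0 < m) (hodd : Odd m)
    (hN : N = m + r) (hk : k = r + 1) (a : Fin N → A) :
    ∑ τ ∈ Finset.univ.filter (fun τ : Perm (Fin N) => IsUnshuffle m τ),
      (Equiv.Perm.sign τ : ℤ) •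
        altProd (fun j : Fin k =>
          if (j : ℕ) = 0 then altProd (fun i : Fin m => a (τ ⟨(i : ℕ), by omega⟩))
          else a (τ ⟨m - 1 + (j : ℕ), by omega⟩))
      = k • altProd a := by
  subst hN
  subst hk
  classical
  have hsgn : ∀ (τ : Perm (Fin (m + r))) (p : Fin (r + 1)) (δ : Perm (Fin r))
      (ρ : Perm (Fin m)),
      (Equiv.Perm.sign τ : ℤ) * ((Equiv.Perm.sign (ins p δ) : ℤ) * (Equiv.Perm.sign ρ : ℤ))
        = (Equiv.Perm.sign (τ * blk ρ δ * (gam hm p)⁻¹) : ℤ) := by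
    intro τ p δ ρ
    have hs : Equiv.Perm.sign (τ * blk ρ δ * (gam hm p)⁻¹)
        = Equiv.Perm.sign τ * (Equiv.Perm.sign ρ * Equiv.Perm.sign δ) * (-1) ^ (p : ℕ) := by
      rw [map_mul, map_mul, map_inv, sign_blk, sign_gam hm hodd]
      congr 1
    rw [hs, sign_ins]
    push_cast
    ring
  have h1 : ∀ τ ∈ Finset.univ.filter (fun τ : Perm (Fin (m + r)) => IsUnshuffle m τ),
      (Equiv.Perm.sign τ : ℤ) •
        altProd (fun j : Fin (r + 1) =>
          if (j : ℕ) = 0 then altProd (fun i : Fin m => a (τ ⟨(i : ℕ), by omega⟩))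
          else a (τ ⟨m - 1 + (j : ℕ), by omega⟩))
      = ∑ p : Fin (r + 1), ∑ δ : Perm (Fin r), ∑ ρ : Perm (Fin m),
          (Equiv.Perm.sign (τ * blk ρ δ * (gam hm p)⁻¹) : ℤ) •
            (List.ofFn fun t : Fin (m + r) => a ((τ * blk ρ δ * (gam hm p)⁻¹) t)).prod := by
    intro τ _
    rw [inner_expand hm a τ, Finset.smul_sum]
    refine Finset.sum_congr rfl fun p _ => ?_
    rw [Finset.smul_sum]
    refine Finset.sum_congr rfl fun δ _ => ?_
    rw [Finset.smul_sum]
    refine Finset.sum_congr rfl fun ρ _ => ?_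
    rw [smul_smul, hsgn τ p δ ρ]
  rw [Finset.sum_congr rfl h1, Finset.sum_comm]
  have h2 : ∀ p : Fin (r + 1),
      (∑ τ ∈ Finset.univ.filter (fun τ : Perm (Fin (m + r)) => IsUnshuffle m τ),
        ∑ δ : Perm (Fin r), ∑ ρ : Perm (Fin m),
          (Equiv.Perm.sign (τ * blk ρ δ * (gam hm p)⁻¹) : ℤ) •
            (List.ofFn fun t : Fin (m + r) => a ((τ * blk ρ δ * (gam hm p)⁻¹) t)).prod)
      = altProd a := by
    intro p
    have hswap : ∀ τ : Perm (Fin (m + r)),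
        (∑ δ : Perm (Fin r), ∑ ρ : Perm (Fin m),
          (Equiv.Perm.sign (τ * blk ρ δ * (gam hm p)⁻¹) : ℤ) •
            (List.ofFn fun t : Fin (m + r) => a ((τ * blk ρ δ * (gam hm p)⁻¹) t)).prod)
        = ∑ ρ : Perm (Fin m), ∑ δ : Perm (Fin r),
          (Equiv.Perm.sign (τ * blk ρ δ * (gam hm p)⁻¹) : ℤ) •
            (List.ofFn fun t : Fin (m + r) => a ((τ * blk ρ δ * (gam hm p)⁻¹) t)).prod :=
      fun τ => Finset.sum_comm
    rw [Finset.sum_congr rfl (fun τ _ => hswap τ)]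
    rw [sum_unshuffle_decomp (fun x : Perm (Fin (m + r)) =>
      (Equiv.Perm.sign (x * (gam hm p)⁻¹) : ℤ) •
        (List.ofFn fun t : Fin (m + r) => a ((x * (gam hm p)⁻¹) t)).prod)]
    exact Fintype.sum_equiv (Equiv.mulRight ((gam hm p)⁻¹))
      _ (fun π : Perm (Fin (m + r)) =>
        (Equiv.Perm.sign π : ℤ) • (List.ofFn fun t : Fin (m + r) => a (π t)).prod)
      (fun x => rfl)
  rw [Finset.sum_congr rfl (fun p _ => h2 p), Finset.sum_const, Finset.card_univ,
    Fintype.card_fin]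

end Key

open Classical in
theorem altProd_comp_odd {A : Type*} [Ring A]
    (k ℓ : ℕ) (hk : 0 < k) (hl : 0 < ℓ) (a : Fin (2 * ℓ + k) → A) :
    ∑ τ ∈ Finset.univ.filter
        (fun τ : Equiv.Perm (Fin (2 * ℓ + k)) => IsUnshuffle (2 * ℓ + 1) τ),
      (Equiv.Perm.sign τ : ℤ) •
        altProd (fun j : Fin k =>
          if (j : ℕ) = 0 then
            altProd (fun i : Fin (2 * ℓ + 1) => a (τ ⟨(i : ℕ), by omega⟩))
          else a (τ ⟨2 * ℓ + (j : ℕ), by omega⟩))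
    = k • altProd a := by
  exact key (2 * ℓ + 1) (k - 1) (2 * ℓ + k) k (by omega) ⟨ℓ, by ring⟩ (by omega) (by omega) a
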